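/- Let (Σ_p) satisfy Assumption (MAT) with λ_k(Σ_p) > λ_{k+1}(Σ_p) for every p, let β_p → β ∈ (0,∞), and let Σ̃_p := Σ_p + E_p/√p where (E_p) are real symmetric p×p matrices with sup_p ‖E_p‖_F < ∞. Then there exist a constant C > 0 and p₀ ∈ ℕ such that for all p ≥ p₀ one has λ_k(Σ̃_p) > λ_{k+1}(Σ̃_p) (so both centering matrices are defined) and ‖M_{β_p}(Σ_p) − M_{β_p}(Σ̃_p)‖_F ≤ C/√p. -/

import Mathlib

open MeasureTheory Matrix Filter Topology ProbabilityTheory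
open scoped ENNReal NNReal

noncomputable section

/-- Entrywise (Borel) measurable space on real matrices. -/
instance matrixMeasurableSpace {m n : Type*} : MeasurableSpace (Matrix m n ℝ) :=
  MeasurableSpace.pi

/-- The Stiefel manifold `O(p,k)` of `p × k` real matrices with orthonormal columns. -/
def Stiefel (p k : ℕ) : Type :=
  {V : Matrix (Fin p) (Fin k) ℝ // Vᵀ * V = 1}

instance {p k : ℕ} : MeasurableSpace (Stiefel p k) :=
  inferInstanceAs (MeasurableSpace {V : Matrix (Fin p) (Fin k) ℝ // Vᵀ * V = 1})

/-- Left rotation of a Stiefel point by an orthogonal matrix. -/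
def stiefelRot {p k : ℕ} {A : Matrix (Fin p) (Fin p) ℝ} (hA : Aᵀ * A = 1)
    (V : Stiefel p k) : Stiefel p k :=
  ⟨A * V.1, by
    rw [Matrix.transpose_mul, Matrix.mul_assoc, ← Matrix.mul_assoc Aᵀ A V.1, hA,
      Matrix.one_mul]
    exact V.2⟩

/-- `ξ` is the uniform (Haar) distribution on `O(p,k)`: it is characterized (uniquely) as a
rotation-invariant Borel probability measure on the Stiefel manifold. -/
def IsUniformStiefel (p k : ℕ) (ξ : Measure (Stiefel p k)) : Prop :=
  IsProbabilityMeasure ξ ∧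
    ∀ (A : Matrix (Fin p) (Fin p) ℝ) (hA : Aᵀ * A = 1),
      Measure.map (stiefelRot hA) ξ = ξ

/-- Normalizing constant of the Gibbs distribution. -/
def gibbsZ {p k : ℕ} (ξ : Measure (Stiefel p k)) (S : Matrix (Fin p) (Fin p) ℝ)
    (β : ℝ) : ℝ :=
  ∫ V : Stiefel p k, Real.exp ((p : ℝ) * β / 2 * ((V.1)ᵀ * S * V.1).trace) ∂ξ

/-- The Gibbs distribution `ν(· | S, β, k)` relative to the uniform distribution `ξ` on
`O(p,k)`. -/
def gibbs {p k : ℕ} (ξ : Measure (Stiefel p k)) (S : Matrix (Fin p) (Fin p) ℝ)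
    (β : ℝ) : Measure (Stiefel p k) :=
  ξ.withDensity fun V =>
    ENNReal.ofReal
      (Real.exp ((p : ℝ) * β / 2 * ((V.1)ᵀ * S * V.1).trace) / gibbsZ ξ S β)

/-- `eigAt l j p` is the (0-based) `j`-th entry of the decreasing eigenvalue list `l p`
(junk value `0` when `j ≥ p`). -/
def eigAt (l : ∀ p, Fin p → ℝ) (j p : ℕ) : ℝ :=
  if h : j < p then l p ⟨j, h⟩ else 0

/-- `eig1 l j` : 0-based `j`-th entry of a single eigenvalue list. -/
def eig1 {p : ℕ} (l : Fin p → ℝ) (j : ℕ) : ℝ :=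
  if h : j < p then l ⟨j, h⟩ else 0

/-- Indices of the top `k` eigenvalues. -/
def topIdx (p k : ℕ) : Finset (Fin p) := Finset.univ.filter fun i => (i : ℕ) < k

/-- Indices of the smallest `p - k` eigenvalues. -/
def bulkIdx (p k : ℕ) : Finset (Fin p) := Finset.univ.filter fun i => k ≤ (i : ℕ)

/-- Hilbert transform `H_μ(x) = ∫ dμ(t) / (x - t)`. -/
def hilbert (μ : Measure ℝ) (x : ℝ) : ℝ := ∫ t, (x - t)⁻¹ ∂μ

/-- Derivative of the Hilbert transform, `H'_μ(x) = -∫ dμ(t) / (x - t)²`. -/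
def hilbertDeriv (μ : Measure ℝ) (x : ℝ) : ℝ := -∫ t, ((x - t) ^ 2)⁻¹ ∂μ

/-- Assumption (MAT) on a sequence of symmetric matrices `S p`, presented together with (any)
orthogonal eigendecomposition `S p = U p * diagonal (l p) * (U p)ᵀ` with decreasing
eigenvalues `l p`.  The limits are `γ 1 ≥ ⋯ ≥ γ k > γ (k+1) > 0` (1-based indexing) and the
limiting spectral measure is `μ`, a probability measure with compact support contained in
`(-∞, γ (k+1)]`. -/
def AssumptionMAT (k : ℕ) (γ : ℕ → ℝ) (μ : Measure ℝ)
    (S : ∀ p, Matrix (Fin p) (Fin p) ℝ) (l : ∀ p, Fin p → ℝ)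
    (U : ∀ p, Matrix (Fin p) (Fin p) ℝ) : Prop :=
  0 < k ∧
  (∀ p, (U p)ᵀ * U p = 1) ∧
  (∀ p, S p = U p * Matrix.diagonal (l p) * (U p)ᵀ) ∧
  (∀ p, Antitone (l p)) ∧
  (∀ i j : ℕ, 1 ≤ i → i ≤ j → j ≤ k + 1 → γ j ≤ γ i) ∧
  γ (k + 1) < γ k ∧ 0 < γ (k + 1) ∧
  IsProbabilityMeasure μ ∧
  (∃ a : ℝ, μ (Set.Icc a (γ (k + 1)))ᶜ = 0) ∧
  (∀ i : ℕ, 1 ≤ i → i ≤ k + 1 →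
    Tendsto (fun p : ℕ => eigAt l (i - 1) p) atTop (nhds (γ i))) ∧
  (∀ f : BoundedContinuousFunction ℝ ℝ,
    Tendsto (fun p : ℕ => ((p : ℝ) - (k : ℝ))⁻¹ * ∑ i ∈ bulkIdx p k, f (l p i))
      atTop (nhds (∫ t, f t ∂μ)))

/-- Frobenius norm. -/
def frob {m n : Type*} [Fintype m] [Fintype n] (A : Matrix m n ℝ) : ℝ :=
  Real.sqrt (∑ i, ∑ j, A i j ^ 2)

/-- `ℓ² → ℓ²` operator norm. -/
def opNorm {m n : Type*} [Fintype m] [Fintype n] (A : Matrix m n ℝ) : ℝ :=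
  sSup {r : ℝ | ∃ x : n → ℝ, (∑ j, x j ^ 2) ≤ 1 ∧ r = Real.sqrt (∑ i, (A.mulVec x i) ^ 2)}

/-- The `p × k` matrix formed by the first `k` columns of `U` (junk `0` when `p < k`). -/
def firstCols (p k : ℕ) (U : Matrix (Fin p) (Fin p) ℝ) : Matrix (Fin p) (Fin k) ℝ :=
  Matrix.of fun r j => if h : (j : ℕ) < p then U r ⟨j, h⟩ else 0

/-- The `p × (p-k)` matrix formed by the last `p - k` columns of `U`. -/
def lastCols (p k : ℕ) (U : Matrix (Fin p) (Fin p) ℝ) : Matrix (Fin p) (Fin (p - k)) ℝ :=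
  Matrix.of fun r c => U r ⟨k + (c : ℕ), by have := c.isLt; omega⟩

/-- Total variation distance `sup_A |μ(A) - ν(A)|`. -/
def tvDist {Ω : Type*} [MeasurableSpace Ω] (μ ν : Measure Ω) : ℝ :=
  sSup {r : ℝ | ∃ A : Set Ω, MeasurableSet A ∧ r = |(μ A).toReal - (ν A).toReal|}

/-- Trade-off function `T(ν₀, ν₁)(α)`. -/
def tradeoff {Ω : Type*} [MeasurableSpace Ω] (ν₀ ν₁ : Measure Ω) (α : ℝ) : ℝ :=
  sInf {r : ℝ | ∃ φ : Ω → ℝ, Measurable φ ∧ (∀ x, φ x ∈ Set.Icc (0 : ℝ) 1) ∧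
    (∫ x, φ x ∂ν₀) ≤ α ∧ r = 1 - ∫ x, φ x ∂ν₁}

open Classical in
/-- Rényi divergence of order `a` of `ν₁` with respect to `ν₀` (with value `⊤` when
`ν₁` is not absolutely continuous w.r.t. `ν₀`). -/
def renyiDiv {Ω : Type*} [MeasurableSpace Ω] (a : ℝ) (ν₁ ν₀ : Measure Ω) : EReal :=
  if ν₁ ≪ ν₀ then
    (((a - 1)⁻¹ * Real.log (∫ x, ((ν₁.rnDeriv ν₀ x).toReal) ^ a ∂ν₀) : ℝ) : EReal)
  else ⊤

/-- Sample covariance of a dataset. -/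
def sampleCov (p : ℕ) (X : Multiset (Fin p → ℝ)) : Matrix (Fin p) (Fin p) ℝ :=
  ((Multiset.card X : ℝ))⁻¹ • (X.map fun x => vecMulVec x x).sum

/-- Assumption (DATA). -/
def AssumptionDATA (k : ℕ) (θ : ℝ) (γ : ℕ → ℝ) (μ : Measure ℝ)
    (X : ∀ p, Multiset (Fin p → ℝ)) (l : ∀ p, Fin p → ℝ)
    (U : ∀ p, Matrix (Fin p) (Fin p) ℝ) : Prop :=
  0 < θ ∧
  (∀ p, ∀ x ∈ X p, (∑ j, x j ^ 2) ≤ (p : ℝ)) ∧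
  Tendsto (fun p : ℕ => (Multiset.card (X p) : ℝ) / (p : ℝ) ^ ((3 : ℝ) / 2)) atTop
    (nhds θ) ∧
  AssumptionMAT k γ μ (fun p => sampleCov p (X p)) l U

open Classical in
/-- `Y` is a neighboring dataset of `X`: add one norm-bounded point or remove one point. -/
def IsNeighbor (p : ℕ) (X Y : Multiset (Fin p → ℝ)) : Prop :=
  (∃ x : Fin p → ℝ, (∑ j, x j ^ 2) ≤ (p : ℝ) ∧ Y = x ::ₘ X) ∨ ∃ x ∈ X, Y = X.erase x

open Classical in
/-- Neighboring datasets without the norm constraint. -/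
def IsNeighborFree (p : ℕ) (X Y : Multiset (Fin p → ℝ)) : Prop :=
  (∃ x : Fin p → ℝ, Y = x ::ₘ X) ∨ ∃ x ∈ X, Y = X.erase x

/-- The asymptotic privacy parameter `σ²_β` (with `Hk = H_μ(γ_k)`, `Hk' = H'_μ(γ_k)`). -/
def sigmaBetaSq (θ Δ Hk Hk' β : ℝ) : ℝ :=
  if Hk - Δ * Hk' ≤ β then
    1 / (2 * Δ * θ ^ 2) * ((β - Hk) ^ 2 / (2 * (β - Hk) + Δ * Hk'))
  else -Hk' / (2 * θ ^ 2)

/-- Empirical Hilbert transform `H_Σ`. -/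
def empH (p k : ℕ) (l : Fin p → ℝ) (x : ℝ) : ℝ :=
  ((p : ℝ))⁻¹ * ∑ i ∈ bulkIdx p k, (x - l i)⁻¹

/-- Empirical kernel `K_Σ`. -/
def empK (p k : ℕ) (l : Fin p → ℝ) (x y : ℝ) : ℝ :=
  ((p : ℝ))⁻¹ * ∑ i ∈ bulkIdx p k, ((x - l i) * (y - l i))⁻¹

/-- The variance function `σ²_Σ(E, β)`, expressed through the eigendecomposition
`Σ = U diag(l) Uᵀ` (decreasing `l`); `(Uᵀ E U) j m = u_jᵀ E u_m`. -/
def varFun (p k : ℕ) (l : Fin p → ℝ) (U E : Matrix (Fin p) (Fin p) ℝ) (β : ℝ) : ℝ :=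
  1 / 2 * ∑ j ∈ topIdx p k, ∑ m ∈ topIdx p k,
      empK p k l (l j) (l m) * ((Uᵀ * E * U) j m) ^ 2 +
    ∑ j ∈ topIdx p k, ∑ i ∈ bulkIdx p k,
      (β - empH p k l (l j)) / (l j - l i) * ((Uᵀ * E * U) i j) ^ 2

/-- `j`-th column of a square matrix. -/
def matCol {p : ℕ} (U : Matrix (Fin p) (Fin p) ℝ) (j : Fin p) : Fin p → ℝ := fun r => U r j

/-- The centering matrix `M_β(Σ)`, via the eigendecomposition `Σ = U diag(l) Uᵀ`. -/
def centerM (p k : ℕ) (l : Fin p → ℝ) (U : Matrix (Fin p) (Fin p) ℝ) (β : ℝ) :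
    Matrix (Fin p) (Fin p) ℝ :=
  (∑ j ∈ topIdx p k, (1 - empH p k l (l j) / β) • vecMulVec (matCol U j) (matCol U j)) +
    ((p : ℝ) * β)⁻¹ •
      ∑ j ∈ topIdx p k, ∑ i ∈ bulkIdx p k,
        (l j - l i)⁻¹ • vecMulVec (matCol U i) (matCol U i)

open Classical in
/-- Spectral functional calculus for symmetric matrices (junk value `0` otherwise). -/
def matFun {k : ℕ} (f : ℝ → ℝ) (S : Matrix (Fin k) (Fin k) ℝ) :
    Matrix (Fin k) (Fin k) ℝ :=
  if hS : S.IsHermitian then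
    (hS.eigenvectorUnitary : Matrix (Fin k) (Fin k) ℝ) *
        Matrix.diagonal (fun i => f (hS.eigenvalues i)) *
      star (hS.eigenvectorUnitary : Matrix (Fin k) (Fin k) ℝ)
  else 0

/-- Vertical stacking of a `k × k` block on top of a `(p-k) × k` block. -/
def vstack {p k : ℕ} (A : Matrix (Fin k) (Fin k) ℝ)
    (B : Matrix (Fin (p - k)) (Fin k) ℝ) : Matrix (Fin p) (Fin k) ℝ :=
  Matrix.of fun r c =>
    if h : (r : ℕ) < k then A ⟨r, h⟩ c
    else B ⟨(r : ℕ) - k, by have := r.isLt; omega⟩ c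

/-- The law of the Gaussian matrix `Z` with independent entries
`Z i j ∼ N(0, 1/(β p (λ_{j+1} - λ_{k+i+1})))` (paper indexing). -/
def gaussZMeasure (p k : ℕ) (l : Fin p → ℝ) (β : ℝ) :
    Measure (Matrix (Fin (p - k)) (Fin k) ℝ) :=
  Measure.pi fun _i : Fin (p - k) => Measure.pi fun _j : Fin k =>
    gaussianReal 0 (Real.toNNReal ((β * p * (eig1 l (_j : ℕ) - eig1 l (k + (_i : ℕ))))⁻¹))

/-- Output distribution of the sampling algorithm, as a measure on `p × k` matrices. -/
def samplerLaw (p k : ℕ) (U : Matrix (Fin p) (Fin p) ℝ) (l : Fin p → ℝ) (β : ℝ)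
    (κ : Measure (Stiefel k k)) : Measure (Matrix (Fin p) (Fin k) ℝ) :=
  Measure.map
    (fun QZ : Stiefel k k × Matrix (Fin (p - k)) (Fin k) ℝ =>
      U * vstack (matFun (fun t => Real.sqrt (max t 0)) (1 - (QZ.2)ᵀ * QZ.2)) QZ.2 *
        (QZ.1).1)
    (κ.prod (gaussZMeasure p k l β))

/-- `V̄⋆ = U⋆ᵀ V`. -/
def Vbar (p k : ℕ) (U : Matrix (Fin p) (Fin p) ℝ) (V : Matrix (Fin p) (Fin k) ℝ) :
    Matrix (Fin k) (Fin k) ℝ :=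
  (firstCols p k U)ᵀ * V

/-- `Q(V) = ((V̄⋆ V̄⋆ᵀ)^{1/2})⁻¹ V̄⋆` (Mathlib's matrix inverse is `0` on singular input). -/
def Qfun (p k : ℕ) (U : Matrix (Fin p) (Fin p) ℝ) (V : Matrix (Fin p) (Fin k) ℝ) :
    Matrix (Fin k) (Fin k) ℝ :=
  (matFun Real.sqrt (Vbar p k U V * (Vbar p k U V)ᵀ))⁻¹ * Vbar p k U V

/-- `Z(V) = V̄⊥ Q(V)ᵀ`. -/
def Zfun (p k : ℕ) (U : Matrix (Fin p) (Fin p) ℝ) (V : Matrix (Fin p) (Fin k) ℝ) :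
    Matrix (Fin (p - k)) (Fin k) ℝ :=
  (lastCols p k U)ᵀ * V * (Qfun p k U V)ᵀ

/-- Lebesgue measure on real matrices. -/
def matVolume (m n : ℕ) : Measure (Matrix (Fin m) (Fin n) ℝ) :=
  Measure.pi fun _ : Fin m => Measure.pi fun _ : Fin n => (volume : Measure ℝ)

open Classical in
/-- Tie-averaged, centered and normalized rank transform of the point `x` within the
dataset `X`. -/
def rankVec (p : ℕ) (X : Multiset (Fin p → ℝ)) (x : Fin p → ℝ) : Fin p → ℝ := fun j =>
  2 / ((Multiset.card X : ℝ) - 1) *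
    ((((X.filter fun y => y j < x j).card : ℝ) +
        (((X.filter fun y => y j = x j).card : ℝ) + 1) / 2) -
      ((Multiset.card X : ℝ) + 1) / 2)

/-- The rank covariance matrix `Σ_rk(X)`. -/
def rankCov (p : ℕ) (X : Multiset (Fin p → ℝ)) : Matrix (Fin p) (Fin p) ℝ :=
  sampleCov p (X.map (rankVec p X))

/-- Assumption (DATA-RANK). -/
def AssumptionDATARank (k : ℕ) (θ : ℝ) (γ : ℕ → ℝ) (μ : Measure ℝ)
    (X : ∀ p, Multiset (Fin p → ℝ)) (l : ∀ p, Fin p → ℝ)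
    (U : ∀ p, Matrix (Fin p) (Fin p) ℝ) : Prop :=
  0 < θ ∧
  Tendsto (fun p : ℕ => (Multiset.card (X p) : ℝ) / (p : ℝ) ^ ((3 : ℝ) / 2)) atTop
    (nhds θ) ∧
  AssumptionMAT k γ μ (fun p => rankCov p (X p)) l U

end

noncomputable section Helpers14

namespace Helper14

open Finset

/-- squared Frobenius norm -/
def frobSq {m n : Type*} [Fintype m] [Fintype n] (A : Matrix m n ℝ) : ℝ :=
  ∑ i, ∑ j, A i j ^ 2

lemma frob_eq {m n : Type*} [Fintype m] [Fintype n] (A : Matrix m n ℝ) :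
    frob A = Real.sqrt (frobSq A) := rfl

lemma frobSq_nonneg {m n : Type*} [Fintype m] [Fintype n] (A : Matrix m n ℝ) :
    0 ≤ frobSq A :=
  Finset.sum_nonneg fun _ _ => Finset.sum_nonneg fun _ _ => sq_nonneg _

variable {p : ℕ}

lemma frobSq_eq_trace (A : Matrix (Fin p) (Fin p) ℝ) :
    frobSq A = (A * Aᵀ).trace := by
  simp [frobSq, Matrix.trace, Matrix.diag, Matrix.mul_apply, Matrix.transpose_apply, pow_two]

lemma frobSq_mul_right (A G : Matrix (Fin p) (Fin p) ℝ) (hG : G * Gᵀ = 1) :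
    frobSq (A * G) = frobSq A := by
  rw [frobSq_eq_trace, frobSq_eq_trace, Matrix.transpose_mul, Matrix.mul_assoc,
    ← Matrix.mul_assoc G Gᵀ Aᵀ, hG, Matrix.one_mul]

lemma frobSq_mul_left (G A : Matrix (Fin p) (Fin p) ℝ) (hG : Gᵀ * G = 1) :
    frobSq (G * A) = frobSq A := by
  rw [frobSq_eq_trace, Matrix.trace_mul_comm, Matrix.transpose_mul,
    Matrix.mul_assoc Aᵀ Gᵀ (G * A), ← Matrix.mul_assoc Gᵀ G A, hG, Matrix.one_mul,
    Matrix.trace_mul_comm, ← frobSq_eq_trace]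

lemma qf_diag (d v : Fin p → ℝ) :
    v ⬝ᵥ (Matrix.diagonal d *ᵥ v) = ∑ i, d i * v i ^ 2 := by
  simp only [dotProduct, Matrix.mulVec_diagonal]
  exact Finset.sum_congr rfl fun i _ => by ring

lemma qf_conj (M A : Matrix (Fin p) (Fin p) ℝ) (v : Fin p → ℝ) :
    v ⬝ᵥ ((Aᵀ * M * A) *ᵥ v) = (A *ᵥ v) ⬝ᵥ (M *ᵥ (A *ᵥ v)) := by
  rw [← Matrix.mulVec_mulVec, ← Matrix.mulVec_mulVec, Matrix.dotProduct_mulVec,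
    Matrix.vecMul_transpose]

lemma qf_abs_le (G : Matrix (Fin p) (Fin p) ℝ) (v : Fin p → ℝ) :
    |v ⬝ᵥ (G *ᵥ v)| ≤ Real.sqrt (frobSq G) * ∑ i, v i ^ 2 := by
  have hexp : v ⬝ᵥ (G *ᵥ v) = ∑ ij : Fin p × Fin p, G ij.1 ij.2 * (v ij.1 * v ij.2) := by
    rw [Fintype.sum_prod_type]
    simp only [dotProduct, Matrix.mulVec, Finset.mul_sum]
    exact Finset.sum_congr rfl fun i _ => Finset.sum_congr rfl fun j _ => by ring
  have hcs := Finset.sum_mul_sq_le_sq_mul_sq Finset.univ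
      (fun ij : Fin p × Fin p => G ij.1 ij.2) (fun ij : Fin p × Fin p => v ij.1 * v ij.2)
  have h1 : ∑ ij : Fin p × Fin p, (G ij.1 ij.2) ^ 2 = frobSq G := by
    rw [Fintype.sum_prod_type]; rfl
  have h2 : ∑ ij : Fin p × Fin p, (v ij.1 * v ij.2) ^ 2 = (∑ i, v i ^ 2) ^ 2 := by
    rw [Fintype.sum_prod_type]
    calc ∑ i, ∑ j, (v i * v j) ^ 2 = ∑ i, v i ^ 2 * ∑ j, v j ^ 2 := by
          refine Finset.sum_congr rfl fun i _ => ?_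
          rw [Finset.mul_sum]
          exact Finset.sum_congr rfl fun j _ => by ring
      _ = (∑ i, v i ^ 2) * (∑ j, v j ^ 2) := by rw [← Finset.sum_mul]
      _ = (∑ i, v i ^ 2) ^ 2 := (sq _).symm
  rw [hexp, ← Real.sqrt_sq_eq_abs]
  have hb : (∑ ij : Fin p × Fin p, G ij.1 ij.2 * (v ij.1 * v ij.2)) ^ 2
      ≤ frobSq G * (∑ i, v i ^ 2) ^ 2 := by
    rw [← h1, ← h2]; exact hcs
  calc Real.sqrt ((∑ ij : Fin p × Fin p, G ij.1 ij.2 * (v ij.1 * v ij.2)) ^ 2)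
      ≤ Real.sqrt (frobSq G * (∑ i, v i ^ 2) ^ 2) := Real.sqrt_le_sqrt hb
    _ = Real.sqrt (frobSq G) * Real.sqrt ((∑ i, v i ^ 2) ^ 2) :=
        Real.sqrt_mul (frobSq_nonneg G) _
    _ = Real.sqrt (frobSq G) * ∑ i, v i ^ 2 := by
        rw [Real.sqrt_sq_eq_abs, abs_of_nonneg (by positivity)]

lemma weyl_le (t : ℝ) (S E : Matrix (Fin p) (Fin p) ℝ) (l lt : Fin p → ℝ)
    (U Ut : Matrix (Fin p) (Fin p) ℝ) (hU : Uᵀ * U = 1) (hUt : Utᵀ * Ut = 1)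
    (hS : S = U * Matrix.diagonal l * Uᵀ)
    (hSt : S + t • E = Ut * Matrix.diagonal lt * Utᵀ)
    (hl : Antitone l) (hlt : Antitone lt) (j : Fin p) :
    lt j ≤ l j + |t| * frob E := by
  have hUo : U * Uᵀ = 1 := mul_eq_one_comm.mp hU
  have hUto : Ut * Utᵀ = 1 := mul_eq_one_comm.mp hUt
  set A : Matrix (Fin p) (Fin p) ℝ := Uᵀ * Ut with hAdef
  set G : Matrix (Fin p) (Fin p) ℝ := Utᵀ * E * Ut with hGdef
  have hAO : Aᵀ * A = 1 := by
    rw [hAdef, Matrix.transpose_mul, Matrix.transpose_transpose, Matrix.mul_assoc,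
      ← Matrix.mul_assoc U Uᵀ Ut, hUo, Matrix.one_mul, hUt]
  have hfrobG : frobSq G = frobSq E := by
    rw [hGdef, Matrix.mul_assoc,
      frobSq_mul_left _ _ (by rw [Matrix.transpose_transpose]; exact hUto),
      frobSq_mul_right _ _ hUto]
  have hkey : Matrix.diagonal lt = Aᵀ * Matrix.diagonal l * A + t • G := by
    have h1 : Utᵀ * (S + t • E) * Ut = Matrix.diagonal lt := by
      rw [hSt]
      calc Utᵀ * (Ut * Matrix.diagonal lt * Utᵀ) * Ut
          = (Utᵀ * Ut) * (Matrix.diagonal lt * (Utᵀ * Ut)) := by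
            simp only [Matrix.mul_assoc]
        _ = Matrix.diagonal lt := by rw [hUt, Matrix.mul_one, Matrix.one_mul]
    rw [← h1, hS, Matrix.mul_add, Matrix.add_mul]
    congr 1
    · rw [hAdef, Matrix.transpose_mul, Matrix.transpose_transpose]
      simp only [Matrix.mul_assoc]
    · rw [hGdef, Matrix.mul_smul, Matrix.smul_mul]
  have hjp : (j : ℕ) < p := j.isLt
  let L : ({i : Fin p // (i : ℕ) < (j : ℕ) + 1} → ℝ) →ₗ[ℝ]
      ({m : Fin p // (m : ℕ) < (j : ℕ)} → ℝ) :=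
    { toFun := fun w m => ∑ i : {i : Fin p // (i : ℕ) < (j : ℕ) + 1}, A m.1 i.1 * w i
      map_add' := by
        intro a b; funext m; simp [mul_add, Finset.sum_add_distrib]
      map_smul' := by
        intro c a; funext m
        simp only [Pi.smul_apply, smul_eq_mul, RingHom.id_apply, Finset.mul_sum]
        exact Finset.sum_congr rfl fun i _ => by ring }
  have hninj : ¬ Function.Injective L := by
    intro hinj
    have h1 := LinearMap.finrank_le_finrank_of_injective hinj
    rw [Module.finrank_pi, Module.finrank_pi] at h1
    have h2 : (j : ℕ) + 1 ≤ Fintype.card {i : Fin p // (i : ℕ) < (j : ℕ) + 1} := by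
      have hinj2 : Function.Injective
          (fun r : Fin ((j : ℕ) + 1) =>
            (⟨⟨(r : ℕ), by omega⟩, by simpa using r.isLt⟩ :
              {i : Fin p // (i : ℕ) < (j : ℕ) + 1})) := by
        intro a b hab
        have : ((a : ℕ) : ℕ) = ((b : ℕ) : ℕ) := by
          simpa using congrArg (fun x : {i : Fin p // (i : ℕ) < (j : ℕ) + 1} =>
            ((x.1 : Fin p) : ℕ)) hab
        exact Fin.ext (by simpa using this)
      simpa using Fintype.card_le_of_injective _ hinj2
    have h3 : Fintype.card {m : Fin p // (m : ℕ) < (j : ℕ)} ≤ (j : ℕ) := by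
      have hinj3 : Function.Injective
          (fun m : {m : Fin p // (m : ℕ) < (j : ℕ)} => (⟨(m.1 : ℕ), m.2⟩ : Fin (j : ℕ))) := by
        intro a b hab
        apply Subtype.ext; apply Fin.ext
        simpa using congrArg Fin.val hab
      simpa using Fintype.card_le_of_injective _ hinj3
    omega
  obtain ⟨a, b, hab, hne⟩ := Function.not_injective_iff.mp hninj
  have hw0 : a - b ≠ 0 := sub_ne_zero.mpr hne
  have hLw : L (a - b) = 0 := by rw [map_sub, hab, sub_self]
  set w := a - b with hwdef
  obtain ⟨i₀, hi₀⟩ := Function.ne_iff.mp hw0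
  set v : Fin p → ℝ :=
    fun i => if h : (i : ℕ) < (j : ℕ) + 1 then w ⟨i, h⟩ else 0 with hvdef
  have hvi₀ : v i₀.1 = w i₀ := by
    rw [hvdef]; simp only [i₀.2, dif_pos]
  have hN : 0 < ∑ i, v i ^ 2 := by
    apply Finset.sum_pos' (fun i _ => sq_nonneg _)
    refine ⟨i₀.1, Finset.mem_univ _, ?_⟩
    rw [hvi₀]
    exact pow_two_pos_of_ne_zero hi₀
  set bb : Fin p → ℝ := A *ᵥ v with hbdef
  have hbzero : ∀ m : Fin p, (m : ℕ) < (j : ℕ) → bb m = 0 := by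
    intro m hm
    have hsum : bb m = ∑ i : {i : Fin p // (i : ℕ) < (j : ℕ) + 1}, A m i.1 * w i := by
      have step1 : bb m = ∑ i : Fin p, A m i * v i := rfl
      have step2 : ∑ i ∈ Finset.univ.filter (fun i : Fin p => (i : ℕ) < (j : ℕ) + 1),
          A m i * v i = ∑ i : Fin p, A m i * v i := by
        apply Finset.sum_filter_of_ne
        intro x _ hx
        by_contra hxk
        apply hx
        rw [hvdef]; simp only [dif_neg hxk, mul_zero]
      have step3 : ∑ i ∈ Finset.univ.filter (fun i : Fin p => (i : ℕ) < (j : ℕ) + 1),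
          A m i * v i = ∑ i : {i : Fin p // (i : ℕ) < (j : ℕ) + 1}, A m i.1 * v i.1 :=
        Finset.sum_subtype _ (by intro x; simp) _
      rw [step1, ← step2, step3]
      refine Finset.sum_congr rfl fun i _ => ?_
      rw [hvdef]; simp only [i.2, dif_pos]
    rw [hsum]
    exact congrFun hLw ⟨m, hm⟩
  have hqf := congrArg (fun M : Matrix (Fin p) (Fin p) ℝ => v ⬝ᵥ (M *ᵥ v)) hkey
  simp only [Matrix.add_mulVec, Matrix.smul_mulVec, dotProduct_add,
    dotProduct_smul, smul_eq_mul] at hqf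
  rw [qf_diag, qf_conj, qf_diag] at hqf
  have e2 : lt j * (∑ i, v i ^ 2) ≤ ∑ i, lt i * v i ^ 2 := by
    rw [Finset.mul_sum]
    apply Finset.sum_le_sum
    intro i _
    by_cases h : (i : ℕ) < (j : ℕ) + 1
    · have hle : lt j ≤ lt i := hlt (by rw [Fin.le_def]; omega)
      exact mul_le_mul_of_nonneg_right hle (sq_nonneg _)
    · have hvz : v i = 0 := by rw [hvdef]; exact dif_neg h
      rw [hvz]; simp
  have e3 : ∑ m, l m * bb m ^ 2 ≤ l j * ∑ m, bb m ^ 2 := by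
    rw [Finset.mul_sum]
    apply Finset.sum_le_sum
    intro m _
    by_cases h : (m : ℕ) < (j : ℕ)
    · rw [hbzero m h]; simp
    · have hle : l m ≤ l j := hl (by rw [Fin.le_def]; omega)
      exact mul_le_mul_of_nonneg_right hle (sq_nonneg _)
  have e4 : ∑ m, bb m ^ 2 = ∑ i, v i ^ 2 := by
    have h1 := qf_conj 1 A v
    rw [Matrix.mul_one, hAO, Matrix.one_mulVec, Matrix.one_mulVec] at h1
    have hvv : v ⬝ᵥ v = ∑ i, v i ^ 2 := by
      simp [dotProduct, pow_two]
    have hbbd : bb ⬝ᵥ bb = ∑ m, bb m ^ 2 := by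
      simp [dotProduct, pow_two]
    rw [hvv, hbbd] at h1
    exact h1.symm
  have e5 : |t * (v ⬝ᵥ (G *ᵥ v))| ≤ |t| * (frob E * ∑ i, v i ^ 2) := by
    rw [abs_mul]
    apply mul_le_mul_of_nonneg_left _ (abs_nonneg t)
    calc |v ⬝ᵥ (G *ᵥ v)| ≤ Real.sqrt (frobSq G) * ∑ i, v i ^ 2 := qf_abs_le G v
      _ = frob E * ∑ i, v i ^ 2 := by rw [hfrobG, ← frob_eq]
  have hmain : lt j * (∑ i, v i ^ 2) ≤ (l j + |t| * frob E) * (∑ i, v i ^ 2) := by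
    have habs : t * (v ⬝ᵥ (G *ᵥ v)) ≤ |t| * (frob E * ∑ i, v i ^ 2) :=
      (le_abs_self _).trans e5
    calc lt j * (∑ i, v i ^ 2) ≤ ∑ i, lt i * v i ^ 2 := e2
      _ = ∑ m, l m * bb m ^ 2 + t * (v ⬝ᵥ (G *ᵥ v)) := hqf
      _ ≤ l j * (∑ m, bb m ^ 2) + |t| * (frob E * ∑ i, v i ^ 2) := add_le_add e3 habs
      _ = (l j + |t| * frob E) * (∑ i, v i ^ 2) := by rw [e4]; ring
  exact le_of_mul_le_mul_right hmain hN

lemma weyl_abs (t : ℝ) (S E : Matrix (Fin p) (Fin p) ℝ) (l lt : Fin p → ℝ)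
    (U Ut : Matrix (Fin p) (Fin p) ℝ) (hU : Uᵀ * U = 1) (hUt : Utᵀ * Ut = 1)
    (hS : S = U * Matrix.diagonal l * Uᵀ)
    (hSt : S + t • E = Ut * Matrix.diagonal lt * Utᵀ)
    (hl : Antitone l) (hlt : Antitone lt) (j : Fin p) :
    |lt j - l j| ≤ |t| * frob E := by
  have h1 := weyl_le t S E l lt U Ut hU hUt hS hSt hl hlt j
  have hcancel : S + t • E + (-t) • E = S := by
    rw [add_assoc, ← add_smul]; simp
  have h2 := weyl_le (-t) (S + t • E) E lt l Ut U hUt hU hSt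
    (by rw [hcancel]; exact hS) hlt hl j
  rw [abs_neg] at h2
  rw [abs_sub_le_iff]
  constructor <;> linarith

lemma abs_sub_le_abs_add_abs (a b : ℝ) : |a - b| ≤ |a| + |b| := by
  calc |a - b| = |a + -b| := by rw [sub_eq_add_neg]
    _ ≤ |a| + |-b| := abs_add_le _ _
    _ = |a| + |b| := by rw [abs_neg]

/-- diagonal coefficient vector of the centering matrix -/
def dvec (p k : ℕ) (l : Fin p → ℝ) (β' : ℝ) : Fin p → ℝ := fun i =>
  if (i : ℕ) < k then 1 - empH p k l (l i) / β'
  else ((p : ℝ) * β')⁻¹ * ∑ j ∈ topIdx p k, (l j - l i)⁻¹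

lemma bulk_eq_filter_not (p k : ℕ) :
    bulkIdx p k = Finset.univ.filter fun i : Fin p => ¬ (i : ℕ) < k := by
  ext i; simp [bulkIdx, not_lt]

lemma centerM_eq (p k : ℕ) (l : Fin p → ℝ) (U : Matrix (Fin p) (Fin p) ℝ) (β' : ℝ) :
    centerM p k l U β' = U * Matrix.diagonal (dvec p k l β') * Uᵀ := by
  ext r s
  have hrhs : (U * Matrix.diagonal (dvec p k l β') * Uᵀ) r s
      = ∑ m, dvec p k l β' m * (U r m * U s m) := by
    rw [Matrix.mul_apply]
    exact Finset.sum_congr rfl fun m _ => by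
      rw [Matrix.mul_diagonal, Matrix.transpose_apply]; ring
  have hlhs : centerM p k l U β' r s =
      (∑ j ∈ topIdx p k, (1 - empH p k l (l j) / β') * (U r j * U s j)) +
        ((p : ℝ) * β')⁻¹ * ∑ j ∈ topIdx p k, ∑ i ∈ bulkIdx p k,
          (l j - l i)⁻¹ * (U r i * U s i) := by
    simp only [centerM, Matrix.add_apply, Matrix.smul_apply, Matrix.sum_apply,
      Matrix.vecMulVec_apply, matCol, smul_eq_mul]
  rw [hlhs, hrhs,
    ← Finset.sum_filter_add_sum_filter_not Finset.univ (fun i : Fin p => (i : ℕ) < k)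
      (fun m => dvec p k l β' m * (U r m * U s m))]
  congr 1
  · refine Finset.sum_congr rfl fun m hm => ?_
    have hmk : (m : ℕ) < k := (Finset.mem_filter.mp hm).2
    simp only [dvec, if_pos hmk]
  · rw [Finset.sum_comm, Finset.mul_sum, ← bulk_eq_filter_not]
    refine Finset.sum_congr rfl fun m hm => ?_
    have hmk : ¬ (m : ℕ) < k := not_lt.mpr (Finset.mem_filter.mp hm).2
    simp only [dvec, if_neg hmk]
    rw [← Finset.sum_mul, ← mul_assoc]

lemma card_topIdx_le (p k : ℕ) : ((topIdx p k).card : ℝ) ≤ k := by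
  have h1 : (topIdx p k).card ≤ (Finset.range k).card := by
    refine Finset.card_le_card_of_injOn (fun i : Fin p => (i : ℕ)) ?_ ?_
    · intro i hi
      exact Finset.mem_coe.mpr (Finset.mem_range.mpr (Finset.mem_filter.mp hi).2)
    · intro a _ b hb hab
      exact Fin.ext hab
  rw [Finset.card_range] at h1
  exact_mod_cast h1

lemma sum_inv_top_bound (p k : ℕ) (l : Fin p → ℝ) (y g : ℝ) (hg : 0 < g)
    (h : ∀ j ∈ topIdx p k, g ≤ l j - y) :
    |∑ j ∈ topIdx p k, (l j - y)⁻¹| ≤ k / g := by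
  have habs : |∑ j ∈ topIdx p k, (l j - y)⁻¹| ≤ ∑ j ∈ topIdx p k, |(l j - y)⁻¹| :=
    Finset.abs_sum_le_sum_abs _ _
  have h2 : ∑ j ∈ topIdx p k, |(l j - y)⁻¹| ≤ ∑ j ∈ topIdx p k, 1 / g := by
    apply Finset.sum_le_sum
    intro j hj
    have hj2 := h j hj
    have hpos : 0 < l j - y := lt_of_lt_of_le hg hj2
    rw [abs_of_pos (inv_pos.mpr hpos), one_div]
    exact inv_anti₀ hg hj2
  have h3 : ∑ _j ∈ topIdx p k, (1 : ℝ) / g = (topIdx p k).card * (1 / g) := by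
    rw [Finset.sum_const, nsmul_eq_mul]
  calc |∑ j ∈ topIdx p k, (l j - y)⁻¹| ≤ ((topIdx p k).card : ℝ) * (1 / g) := by
        rw [← h3]; exact habs.trans h2
    _ ≤ (k : ℝ) * (1 / g) :=
        mul_le_mul_of_nonneg_right (card_topIdx_le p k) (by positivity)
    _ = k / g := by ring

lemma empH_bounds (p k : ℕ) (hp : 0 < p) (l : Fin p → ℝ) (x g : ℝ) (hg : 0 < g)
    (h : ∀ i ∈ bulkIdx p k, g ≤ x - l i) :
    0 ≤ empH p k l x ∧ empH p k l x ≤ 1 / g := by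
  have hterm : ∀ i ∈ bulkIdx p k, (0 : ℝ) ≤ (x - l i)⁻¹ ∧ (x - l i)⁻¹ ≤ 1 / g := by
    intro i hi
    have h1 := h i hi
    refine ⟨inv_nonneg.mpr (by linarith), ?_⟩
    rw [one_div]
    exact inv_anti₀ hg h1
  have hp' : (0 : ℝ) < p := by exact_mod_cast hp
  constructor
  · exact mul_nonneg (by positivity) (Finset.sum_nonneg fun i hi => (hterm i hi).1)
  · have hcard : ((bulkIdx p k).card : ℝ) ≤ p := by
      have h4 := Finset.card_le_univ (bulkIdx p k)
      rw [Fintype.card_fin] at h4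
      exact_mod_cast h4
    have hsum : ∑ i ∈ bulkIdx p k, (x - l i)⁻¹ ≤ (p : ℝ) * (1 / g) := by
      calc ∑ i ∈ bulkIdx p k, (x - l i)⁻¹ ≤ ∑ _i ∈ bulkIdx p k, 1 / g :=
            Finset.sum_le_sum fun i hi => (hterm i hi).2
        _ = ((bulkIdx p k).card : ℝ) * (1 / g) := by rw [Finset.sum_const, nsmul_eq_mul]
        _ ≤ (p : ℝ) * (1 / g) := mul_le_mul_of_nonneg_right hcard (by positivity)
    calc empH p k l x ≤ (p : ℝ)⁻¹ * ((p : ℝ) * (1 / g)) := by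
          exact mul_le_mul_of_nonneg_left hsum (by positivity)
      _ = 1 / g := by rw [← mul_assoc, inv_mul_cancel₀ hp'.ne', one_mul]
  
lemma inv_diff_abs_le (x a y b g : ℝ) (hg : 0 < g) (h1 : g ≤ x - a) (h2 : g ≤ y - b) :
    |(x - a)⁻¹ - (y - b)⁻¹| ≤ (|x - y| + |a - b|) / g ^ 2 := by
  have hxa : 0 < x - a := lt_of_lt_of_le hg h1
  have hyb : 0 < y - b := lt_of_lt_of_le hg h2
  rw [inv_sub_inv hxa.ne' hyb.ne', abs_div]
  have hnum : |y - b - (x - a)| ≤ |x - y| + |a - b| := by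
    have he : y - b - (x - a) = -(x - y) + (a - b) := by ring
    rw [he]
    exact (abs_add_le _ _).trans_eq (by rw [abs_neg])
  have hden : g ^ 2 ≤ |(x - a) * (y - b)| := by
    rw [abs_of_pos (mul_pos hxa hyb)]
    calc g ^ 2 = g * g := sq g
      _ ≤ (x - a) * (y - b) := mul_le_mul h1 h2 hg.le hxa.le
  exact div_le_div₀ (by positivity) hnum (by positivity) hden

lemma empH_diff_le (p k : ℕ) (hp : 0 < p) (l lt : Fin p → ℝ) (x y g ε : ℝ)
    (hg : 0 < g) (hε : 0 ≤ ε)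
    (hW : ∀ i, |l i - lt i| ≤ ε)
    (hx : ∀ i ∈ bulkIdx p k, g ≤ x - l i) (hy : ∀ i ∈ bulkIdx p k, g ≤ y - lt i) :
    |empH p k l x - empH p k lt y| ≤ (|x - y| + ε) / g ^ 2 := by
  have hp' : (0 : ℝ) < p := by exact_mod_cast hp
  have hsplit : empH p k l x - empH p k lt y
      = (p : ℝ)⁻¹ * ∑ i ∈ bulkIdx p k, ((x - l i)⁻¹ - (y - lt i)⁻¹) := by
    simp only [empH, Finset.sum_sub_distrib, mul_sub]
  rw [hsplit, abs_mul, abs_of_nonneg (by positivity : (0:ℝ) ≤ (p : ℝ)⁻¹)]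
  have hcard : ((bulkIdx p k).card : ℝ) ≤ p := by
    have h4 := Finset.card_le_univ (bulkIdx p k)
    rw [Fintype.card_fin] at h4
    exact_mod_cast h4
  have h1 : |∑ i ∈ bulkIdx p k, ((x - l i)⁻¹ - (y - lt i)⁻¹)|
      ≤ (p : ℝ) * ((|x - y| + ε) / g ^ 2) := by
    calc |∑ i ∈ bulkIdx p k, ((x - l i)⁻¹ - (y - lt i)⁻¹)|
        ≤ ∑ i ∈ bulkIdx p k, |(x - l i)⁻¹ - (y - lt i)⁻¹| :=
          Finset.abs_sum_le_sum_abs _ _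
      _ ≤ ∑ _i ∈ bulkIdx p k, (|x - y| + ε) / g ^ 2 := by
          apply Finset.sum_le_sum
          intro i hi
          calc |(x - l i)⁻¹ - (y - lt i)⁻¹| ≤ (|x - y| + |l i - lt i|) / g ^ 2 :=
              inv_diff_abs_le x (l i) y (lt i) g hg (hx i hi) (hy i hi)
            _ ≤ (|x - y| + ε) / g ^ 2 := by gcongr; exact hW i
      _ = ((bulkIdx p k).card : ℝ) * ((|x - y| + ε) / g ^ 2) := by
          rw [Finset.sum_const, nsmul_eq_mul]
      _ ≤ (p : ℝ) * ((|x - y| + ε) / g ^ 2) :=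
          mul_le_mul_of_nonneg_right hcard (by positivity)
  calc (p : ℝ)⁻¹ * |∑ i ∈ bulkIdx p k, ((x - l i)⁻¹ - (y - lt i)⁻¹)|
      ≤ (p : ℝ)⁻¹ * ((p : ℝ) * ((|x - y| + ε) / g ^ 2)) :=
        mul_le_mul_of_nonneg_left h1 (by positivity)
    _ = (|x - y| + ε) / g ^ 2 := by
        rw [← mul_assoc, inv_mul_cancel₀ hp'.ne', one_mul]

/-- The constant in the main estimate. -/
def Kc (k : ℕ) (βlo g CE : ℝ) : ℝ :=
  (2 / (βlo ^ 2 * g ^ 4) + (1 + 1 / (βlo * g) + k / (βlo * g)) ^ 2 / g ^ 2) * CE ^ 2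
    + (2 * CE ^ 2 / (βlo ^ 2 * g ^ 4)) * k ^ 2 + 4 * k ^ 2 / (βlo ^ 2 * g ^ 2)

lemma Kc_nonneg (k : ℕ) (βlo g CE : ℝ) : 0 ≤ Kc k βlo g CE := by
  unfold Kc
  positivity

set_option maxHeartbeats 2000000 in
lemma main_est (p k : ℕ) (hk : k < p)
    (l lt : Fin p → ℝ) (U Ut E : Matrix (Fin p) (Fin p) ℝ)
    (hU : Uᵀ * U = 1) (hUt : Utᵀ * Ut = 1)
    (hrel : U * Matrix.diagonal l * Uᵀ + (Real.sqrt p)⁻¹ • E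
      = Ut * Matrix.diagonal lt * Utᵀ)
    (β' βlo g CE : ℝ) (hβlo : 0 < βlo) (hβ' : βlo ≤ β') (hg : 0 < g)
    (hCE : frob E ≤ CE)
    (hW : ∀ i, |l i - lt i| ≤ CE / Real.sqrt p)
    (hsep1 : ∀ i j : Fin p, (i : ℕ) < k → k ≤ (j : ℕ) → g ≤ l i - l j)
    (hsep2 : ∀ i j : Fin p, (i : ℕ) < k → k ≤ (j : ℕ) → g ≤ l i - lt j)
    (hsep3 : ∀ i j : Fin p, (i : ℕ) < k → k ≤ (j : ℕ) → g ≤ lt i - l j)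
    (hsep4 : ∀ i j : Fin p, (i : ℕ) < k → k ≤ (j : ℕ) → g ≤ lt i - lt j) :
    frob (centerM p k l U β' - centerM p k lt Ut β') ≤
      Real.sqrt (Kc k βlo g CE) / Real.sqrt p := by
  have hp : 0 < p := lt_of_le_of_lt (Nat.zero_le k) hk
  have hp' : (0 : ℝ) < p := by exact_mod_cast hp
  have hp1 : (1 : ℝ) ≤ p := by exact_mod_cast hp
  have hsp : 0 < Real.sqrt p := Real.sqrt_pos.mpr hp'
  have hβ'0 : 0 < β' := lt_of_lt_of_le hβlo hβ'
  have hCE0 : 0 ≤ CE := (Real.sqrt_nonneg _).trans hCE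
  have hgne : g ≠ 0 := hg.ne'
  have hβlone : βlo ≠ 0 := hβlo.ne'
  have hpne : (p : ℝ) ≠ 0 := hp'.ne'
  have hβ'ne : β' ≠ 0 := hβ'0.ne'
  set t : ℝ := (Real.sqrt p)⁻¹ with htdef
  have hUo : U * Uᵀ = 1 := mul_eq_one_comm.mp hU
  have hUto : Ut * Utᵀ = 1 := mul_eq_one_comm.mp hUt
  set A : Matrix (Fin p) (Fin p) ℝ := Uᵀ * Ut with hAdef
  set F : Matrix (Fin p) (Fin p) ℝ := Uᵀ * E * Ut with hFdef
  have hAO : Aᵀ * A = 1 := by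
    rw [hAdef, Matrix.transpose_mul, Matrix.transpose_transpose, Matrix.mul_assoc,
      ← Matrix.mul_assoc U Uᵀ Ut, hUo, Matrix.one_mul, hUt]
  have hAOr : A * Aᵀ = 1 := mul_eq_one_comm.mp hAO
  have hfrobF : frobSq F = frobSq E := by
    rw [hFdef, Matrix.mul_assoc,
      frobSq_mul_left _ _ (by rw [Matrix.transpose_transpose]; exact hUo),
      frobSq_mul_right _ _ hUto]
  have hkeyM : Matrix.diagonal l * A + t • F = A * Matrix.diagonal lt := by
    have h1 : Uᵀ * (U * Matrix.diagonal l * Uᵀ + t • E) * Ut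
        = Uᵀ * (Ut * Matrix.diagonal lt * Utᵀ) * Ut := by rw [hrel]
    have hL : Uᵀ * (U * Matrix.diagonal l * Uᵀ + t • E) * Ut
        = Matrix.diagonal l * A + t • F := by
      rw [Matrix.mul_add, Matrix.add_mul]
      congr 1
      · calc Uᵀ * (U * Matrix.diagonal l * Uᵀ) * Ut
            = (Uᵀ * U) * (Matrix.diagonal l * (Uᵀ * Ut)) := by
              simp only [Matrix.mul_assoc]
          _ = Matrix.diagonal l * A := by rw [hU, Matrix.one_mul]
      · rw [Matrix.mul_smul, Matrix.smul_mul]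
    have hR : Uᵀ * (Ut * Matrix.diagonal lt * Utᵀ) * Ut
        = A * Matrix.diagonal lt := by
      calc Uᵀ * (Ut * Matrix.diagonal lt * Utᵀ) * Ut
          = (Uᵀ * Ut) * (Matrix.diagonal lt * (Utᵀ * Ut)) := by
            simp only [Matrix.mul_assoc]
        _ = A * Matrix.diagonal lt := by rw [hUt, Matrix.mul_one]
    rw [← hL, h1, hR]
  have hkeyE : ∀ i j, (l i - lt j) * A i j = -(t * F i j) := by
    intro i j
    have h0 : (Matrix.diagonal l * A + t • F) i j = (A * Matrix.diagonal lt) i j := by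
      rw [hkeyM]
    rw [Matrix.add_apply, Matrix.smul_apply, Matrix.diagonal_mul, Matrix.mul_diagonal,
      smul_eq_mul] at h0
    linear_combination h0
  set d := dvec p k l β' with hd0
  set dt := dvec p k lt β' with hdt0
  have hUtUA : Ut = U * A := by
    rw [hAdef, ← Matrix.mul_assoc, hUo, Matrix.one_mul]
  have hMdiff : centerM p k l U β' - centerM p k lt Ut β'
      = U * (Matrix.diagonal d - A * Matrix.diagonal dt * Aᵀ) * Uᵀ := by
    rw [centerM_eq p k l U β', centerM_eq p k lt Ut β', hUtUA, Matrix.transpose_mul]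
    rw [← hd0, ← hdt0]
    simp only [Matrix.mul_sub, Matrix.sub_mul, Matrix.mul_assoc]
  have hfrobstep : frobSq (centerM p k l U β' - centerM p k lt Ut β')
      = ∑ i, ∑ j, ((d i - dt j) * A i j) ^ 2 := by
    rw [hMdiff,
      frobSq_mul_right _ _ (by rw [Matrix.transpose_transpose]; exact hU),
      frobSq_mul_left _ _ hU]
    have hXA : frobSq (Matrix.diagonal d - A * Matrix.diagonal dt * Aᵀ)
        = frobSq (Matrix.diagonal d * A - A * Matrix.diagonal dt) := by
      rw [← frobSq_mul_right (Matrix.diagonal d - A * Matrix.diagonal dt * Aᵀ) A hAOr]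
      congr 1
      rw [Matrix.sub_mul]
      congr 1
      rw [Matrix.mul_assoc (A * Matrix.diagonal dt) Aᵀ A, hAO, Matrix.mul_one]
    rw [hXA]
    refine Finset.sum_congr rfl fun i _ => Finset.sum_congr rfl fun j _ => ?_
    rw [Matrix.sub_apply, Matrix.diagonal_mul, Matrix.mul_diagonal]
    ring
  have ht2 : t ^ 2 = (p : ℝ)⁻¹ := by
    rw [htdef, inv_pow, Real.sq_sqrt hp'.le]
  have hF2 : ∀ i j, (l i - lt j) ^ 2 * A i j ^ 2 = F i j ^ 2 / p := by
    intro i j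
    rw [← mul_pow, hkeyE i j, neg_sq, mul_pow, ht2]
    ring
  have hA1 : ∀ i j, A i j ^ 2 ≤ 1 := by
    intro i j
    have h0 : (A * Aᵀ) i i = 1 := by rw [hAOr]; simp [Matrix.one_apply]
    rw [Matrix.mul_apply] at h0
    have hrow : ∑ j', A i j' ^ 2 = 1 := by
      rw [← h0]
      exact Finset.sum_congr rfl fun j' _ => by rw [Matrix.transpose_apply, pow_two]
    calc A i j ^ 2 ≤ ∑ j', A i j' ^ 2 :=
        Finset.single_le_sum (f := fun j' => A i j' ^ 2)
          (fun j' _ => sq_nonneg _) (Finset.mem_univ j)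
      _ = 1 := hrow
  have hsumA : ∑ i, ∑ j, A i j ^ 2 = (p : ℝ) := by
    have h0 : frobSq A = (A * Aᵀ).trace := frobSq_eq_trace A
    rw [hAOr] at h0
    calc ∑ i, ∑ j, A i j ^ 2 = frobSq A := rfl
      _ = (1 : Matrix (Fin p) (Fin p) ℝ).trace := h0
      _ = (p : ℝ) := by rw [Matrix.trace_one]; simp
  set ε := CE / Real.sqrt p with hεdef
  have hε0 : 0 ≤ ε := by positivity
  have hε2 : ε ^ 2 = CE ^ 2 / p := by
    rw [hεdef, div_pow, Real.sq_sqrt hp'.le]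
  have hbulkmem : ∀ i' : Fin p, i' ∈ bulkIdx p k → k ≤ (i' : ℕ) :=
    fun i' hi' => (Finset.mem_filter.mp hi').2
  have htopmem : ∀ j ∈ topIdx p k, (j : ℕ) < k :=
    fun j hj => (Finset.mem_filter.mp hj).2
  have hH_l : ∀ i : Fin p, (i : ℕ) < k →
      0 ≤ empH p k l (l i) ∧ empH p k l (l i) ≤ 1 / g :=
    fun i hi => empH_bounds p k hp l (l i) g hg
      (fun i' hi' => hsep1 i i' hi (hbulkmem i' hi'))
  have hH_lt : ∀ i : Fin p, (i : ℕ) < k →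
      0 ≤ empH p k lt (lt i) ∧ empH p k lt (lt i) ≤ 1 / g :=
    fun i hi => empH_bounds p k hp lt (lt i) g hg
      (fun i' hi' => hsep4 i i' hi (hbulkmem i' hi'))
  have hdtop_gen : ∀ (ll : Fin p → ℝ) (i : Fin p), (i : ℕ) < k →
      (0 ≤ empH p k ll (ll i) ∧ empH p k ll (ll i) ≤ 1 / g) →
      |dvec p k ll β' i| ≤ 1 + 1 / (βlo * g) := by
    intro ll i hi hH
    have hd : dvec p k ll β' i = 1 - empH p k ll (ll i) / β' := by
      simp only [dvec, if_pos hi]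
    rw [hd]
    have h2 : empH p k ll (ll i) / β' ≤ 1 / (βlo * g) := by
      calc empH p k ll (ll i) / β' ≤ (1 / g) / βlo :=
            div_le_div₀ (by positivity) hH.2 hβlo hβ'
        _ = 1 / (βlo * g) := by rw [div_div, mul_comm]
    have h3 : 0 ≤ empH p k ll (ll i) / β' := div_nonneg hH.1 hβ'0.le
    rw [abs_le]
    constructor <;> [linarith; linarith [le_trans h3 h2]]
  have hdbulk_gen : ∀ (ll : Fin p → ℝ) (i : Fin p), k ≤ (i : ℕ) →
      (∀ j ∈ topIdx p k, g ≤ ll j - ll i) →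
      |dvec p k ll β' i| ≤ (k / (βlo * g)) / p := by
    intro ll i hi hsep
    have hd : dvec p k ll β' i
        = ((p : ℝ) * β')⁻¹ * ∑ j ∈ topIdx p k, (ll j - ll i)⁻¹ := by
      simp only [dvec, if_neg (not_lt.mpr hi)]
    rw [hd, abs_mul, abs_of_nonneg (by positivity : (0:ℝ) ≤ ((p : ℝ) * β')⁻¹)]
    have h1 : |∑ j ∈ topIdx p k, (ll j - ll i)⁻¹| ≤ k / g :=
      sum_inv_top_bound p k ll (ll i) g hg hsep
    calc ((p : ℝ) * β')⁻¹ * |∑ j ∈ topIdx p k, (ll j - ll i)⁻¹|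
        ≤ ((p : ℝ) * βlo)⁻¹ * (k / g) := by
          apply mul_le_mul _ h1 (abs_nonneg _) (by positivity)
          exact inv_anti₀ (by positivity)
            (mul_le_mul_of_nonneg_left hβ' hp'.le)
      _ = (k / (βlo * g)) / p := by ring
  have hdtop : ∀ i : Fin p, (i : ℕ) < k → |d i| ≤ 1 + 1 / (βlo * g) :=
    fun i hi => hdtop_gen l i hi (hH_l i hi)
  have hdttop : ∀ i : Fin p, (i : ℕ) < k → |dt i| ≤ 1 + 1 / (βlo * g) :=
    fun i hi => hdtop_gen lt i hi (hH_lt i hi)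
  have hdbulk : ∀ i : Fin p, k ≤ (i : ℕ) → |d i| ≤ (k / (βlo * g)) / p :=
    fun i hi => hdbulk_gen l i hi (fun j hj => hsep1 j i (htopmem j hj) hi)
  have hdtbulk : ∀ i : Fin p, k ≤ (i : ℕ) → |dt i| ≤ (k / (βlo * g)) / p :=
    fun i hi => hdbulk_gen lt i hi (fun j hj => hsep4 j i (htopmem j hj) hi)
  have hHdiff : ∀ i j : Fin p, (i : ℕ) < k → (j : ℕ) < k →
      |empH p k l (l i) - empH p k lt (lt j)| ≤ (|l i - lt j| + ε) / g ^ 2 := by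
    intro i j hi hj
    apply empH_diff_le p k hp l lt (l i) (lt j) g ε hg hε0 hW
    · exact fun i' hi' => hsep1 i i' hi (hbulkmem i' hi')
    · exact fun i' hi' => hsep4 j i' hj (hbulkmem i' hi')
  set D1 : ℝ := 1 + 1 / (βlo * g) + k / (βlo * g) with hD1
  have hD1_0 : 0 ≤ D1 := by rw [hD1]; positivity
  set K1 : ℝ := 2 / (βlo ^ 2 * g ^ 4) + D1 ^ 2 / g ^ 2 with hK1
  set K2 : ℝ := 2 * CE ^ 2 / (βlo ^ 2 * g ^ 4) with hK2
  set K3 : ℝ := 4 * (k : ℝ) ^ 2 / (βlo ^ 2 * g ^ 2) with hK3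
  set χ : Fin p → ℝ := fun i => if (i : ℕ) < k then 1 else 0 with hχ
  have hχ0 : ∀ i, 0 ≤ χ i := by
    intro i; rw [hχ]; dsimp only; split <;> norm_num
  have hdbnd : ∀ (i : Fin p), k ≤ (i : ℕ) → |d i| ≤ k / (βlo * g) := by
    intro i hi
    exact (hdbulk i hi).trans (div_le_self (by positivity) hp1)
  have hdtbnd : ∀ (i : Fin p), k ≤ (i : ℕ) → |dt i| ≤ k / (βlo * g) := by
    intro i hi
    exact (hdtbulk i hi).trans (div_le_self (by positivity) hp1)
  have hpoint : ∀ i j : Fin p, ((d i - dt j) * A i j) ^ 2 ≤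
      K1 * (F i j ^ 2 / p) + (K2 / p) * (χ i * χ j) + (K3 / p ^ 2) * A i j ^ 2 := by
    intro i j
    have hK30 : 0 ≤ (K3 / p ^ 2) * A i j ^ 2 := by
      rw [hK3]; positivity
    have hK20 : 0 ≤ (K2 / p) * (χ i * χ j) := by
      apply mul_nonneg _ (mul_nonneg (hχ0 i) (hχ0 j))
      rw [hK2]; positivity
    have hK10 : 0 ≤ K1 * (F i j ^ 2 / p) := by
      apply mul_nonneg _ (by positivity)
      rw [hK1]; positivity
    have hgcross : ∀ (hge : g ^ 2 ≤ (l i - lt j) ^ 2) (hDd : |d i - dt j| ≤ D1),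
        ((d i - dt j) * A i j) ^ 2 ≤ (D1 ^ 2 / g ^ 2) * (F i j ^ 2 / p) := by
      intro hge hDd
      have hAg : A i j ^ 2 * g ^ 2 ≤ F i j ^ 2 / p := by
        calc A i j ^ 2 * g ^ 2 ≤ (l i - lt j) ^ 2 * A i j ^ 2 := by
              nlinarith [sq_nonneg (A i j)]
          _ = F i j ^ 2 / p := hF2 i j
      have hd2 : (d i - dt j) ^ 2 ≤ D1 ^ 2 := by
        rw [← sq_abs (d i - dt j)]
        exact pow_le_pow_left₀ (abs_nonneg _) hDd 2
      calc ((d i - dt j) * A i j) ^ 2 = (d i - dt j) ^ 2 * A i j ^ 2 := mul_pow _ _ 2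
        _ ≤ D1 ^ 2 * A i j ^ 2 := mul_le_mul_of_nonneg_right hd2 (sq_nonneg _)
        _ = (D1 ^ 2 / g ^ 2) * (A i j ^ 2 * g ^ 2) := by field_simp
        _ ≤ (D1 ^ 2 / g ^ 2) * (F i j ^ 2 / p) :=
            mul_le_mul_of_nonneg_left hAg (by positivity)
    have hK1cross : (D1 ^ 2 / g ^ 2) * (F i j ^ 2 / p) ≤ K1 * (F i j ^ 2 / p) := by
      apply mul_le_mul_of_nonneg_right _ (by positivity)
      rw [hK1]
      have : (0:ℝ) ≤ 2 / (βlo ^ 2 * g ^ 4) := by positivity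
      linarith
    by_cases hi : (i : ℕ) < k <;> by_cases hj : (j : ℕ) < k
    · -- top-top
      have hχij : χ i * χ j = 1 := by rw [hχ]; simp [hi, hj]
      have h1 : d i - dt j = (empH p k lt (lt j) - empH p k l (l i)) / β' := by
        rw [hd0, hdt0]
        simp only [dvec, if_pos hi, if_pos hj]
        ring
      have h2 : |d i - dt j| ≤ (|l i - lt j| + ε) / (g ^ 2 * βlo) := by
        rw [h1, abs_div, abs_of_pos hβ'0]
        calc |empH p k lt (lt j) - empH p k l (l i)| / β'
            ≤ ((|l i - lt j| + ε) / g ^ 2) / βlo := by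
              apply div_le_div₀ (by positivity) _ hβlo hβ'
              rw [abs_sub_comm]
              exact hHdiff i j hi hj
          _ = (|l i - lt j| + ε) / (g ^ 2 * βlo) := by rw [div_div]
      have h4 : (d i - dt j) ^ 2 ≤ (|l i - lt j| + ε) ^ 2 / (g ^ 2 * βlo) ^ 2 := by
        rw [← div_pow, ← sq_abs (d i - dt j)]
        exact pow_le_pow_left₀ (abs_nonneg _) h2 2
      have h5 : (|l i - lt j| + ε) ^ 2 ≤ 2 * ((l i - lt j) ^ 2 + ε ^ 2) := by
        have hsa : |l i - lt j| ^ 2 = (l i - lt j) ^ 2 := sq_abs _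
        nlinarith [sq_nonneg (|l i - lt j| - ε)]
      have h3 : (d i - dt j) ^ 2 ≤ 2 * ((l i - lt j) ^ 2 + ε ^ 2) / (g ^ 2 * βlo) ^ 2 := by
        calc (d i - dt j) ^ 2 ≤ (|l i - lt j| + ε) ^ 2 / (g ^ 2 * βlo) ^ 2 := h4
          _ ≤ 2 * ((l i - lt j) ^ 2 + ε ^ 2) / (g ^ 2 * βlo) ^ 2 :=
              (div_le_div_iff_of_pos_right (by positivity)).mpr h5
      have h8 : ε ^ 2 * A i j ^ 2 ≤ CE ^ 2 / p := by
        calc ε ^ 2 * A i j ^ 2 ≤ ε ^ 2 * 1 :=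
            mul_le_mul_of_nonneg_left (hA1 i j) (sq_nonneg _)
          _ = CE ^ 2 / p := by rw [mul_one, hε2]
      have hterm2 : (2 / (g ^ 2 * βlo) ^ 2) * (CE ^ 2 / p) = (K2 / p) * (χ i * χ j) := by
        rw [hχij, mul_one, hK2]
        ring
      have hterm1 : (2 / (g ^ 2 * βlo) ^ 2) * ((l i - lt j) ^ 2 * A i j ^ 2)
          ≤ K1 * (F i j ^ 2 / p) := by
        rw [hF2 i j]
        apply mul_le_mul_of_nonneg_right _ (by positivity)
        rw [hK1]
        have he : (2:ℝ) / (g ^ 2 * βlo) ^ 2 = 2 / (βlo ^ 2 * g ^ 4) := by ring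
        rw [he]
        have : (0:ℝ) ≤ D1 ^ 2 / g ^ 2 := by positivity
        linarith
      calc ((d i - dt j) * A i j) ^ 2 = (d i - dt j) ^ 2 * A i j ^ 2 := mul_pow _ _ 2
        _ ≤ (2 * ((l i - lt j) ^ 2 + ε ^ 2) / (g ^ 2 * βlo) ^ 2) * A i j ^ 2 :=
            mul_le_mul_of_nonneg_right h3 (sq_nonneg _)
        _ = (2 / (g ^ 2 * βlo) ^ 2) * ((l i - lt j) ^ 2 * A i j ^ 2)
            + (2 / (g ^ 2 * βlo) ^ 2) * (ε ^ 2 * A i j ^ 2) := by ring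
        _ ≤ K1 * (F i j ^ 2 / p) + (2 / (g ^ 2 * βlo) ^ 2) * (CE ^ 2 / p) := by
            apply add_le_add hterm1
            exact mul_le_mul_of_nonneg_left h8 (by positivity)
        _ = K1 * (F i j ^ 2 / p) + (K2 / p) * (χ i * χ j) := by rw [hterm2]
        _ ≤ K1 * (F i j ^ 2 / p) + (K2 / p) * (χ i * χ j) + (K3 / p ^ 2) * A i j ^ 2 := by
            linarith
    · -- top-bulk
      have hjk : k ≤ (j : ℕ) := not_lt.mp hj
      have hDd : |d i - dt j| ≤ D1 := by
        have h1 := hdtop i hi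
        have h2 := hdtbnd j hjk
        calc |d i - dt j| ≤ |d i| + |dt j| := abs_sub_le_abs_add_abs _ _
          _ ≤ D1 := by rw [hD1]; linarith
      have hge : g ^ 2 ≤ (l i - lt j) ^ 2 := by
        have := hsep2 i j hi hjk
        nlinarith
      have hh := (hgcross hge hDd).trans hK1cross
      linarith
    · -- bulk-top
      have hik : k ≤ (i : ℕ) := not_lt.mp hi
      have hDd : |d i - dt j| ≤ D1 := by
        have h1 := hdbnd i hik
        have h2 := hdttop j hj
        calc |d i - dt j| ≤ |d i| + |dt j| := abs_sub_le_abs_add_abs _ _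
          _ ≤ D1 := by rw [hD1]; linarith
      have hge : g ^ 2 ≤ (l i - lt j) ^ 2 := by
        have := hsep3 j i hj hik
        nlinarith
      have hh := (hgcross hge hDd).trans hK1cross
      linarith
    · -- bulk-bulk
      have hik : k ≤ (i : ℕ) := not_lt.mp hi
      have hjk : k ≤ (j : ℕ) := not_lt.mp hj
      have h1 := hdbulk i hik
      have h2 := hdtbulk j hjk
      have hDd : |d i - dt j| ≤ 2 * ((k / (βlo * g)) / p) := by
        calc |d i - dt j| ≤ |d i| + |dt j| := abs_sub_le_abs_add_abs _ _
          _ ≤ 2 * ((k / (βlo * g)) / p) := by linarith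
      have hd2 : (d i - dt j) ^ 2 ≤ K3 / p ^ 2 := by
        have h3 : (d i - dt j) ^ 2 ≤ (2 * ((k / (βlo * g)) / p)) ^ 2 := by
          rw [← sq_abs (d i - dt j)]
          exact pow_le_pow_left₀ (abs_nonneg _) hDd 2
        calc (d i - dt j) ^ 2 ≤ (2 * ((k / (βlo * g)) / p)) ^ 2 := h3
          _ = K3 / p ^ 2 := by rw [hK3]; ring
      have hmain : ((d i - dt j) * A i j) ^ 2 ≤ (K3 / p ^ 2) * A i j ^ 2 := by
        calc ((d i - dt j) * A i j) ^ 2 = (d i - dt j) ^ 2 * A i j ^ 2 := mul_pow _ _ 2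
          _ ≤ (K3 / p ^ 2) * A i j ^ 2 := mul_le_mul_of_nonneg_right hd2 (sq_nonneg _)
      linarith
  -- summation
  have hmm : ∀ (f : Fin p → Fin p → ℝ) (c : ℝ),
      ∑ i, ∑ j, c * f i j = c * ∑ i, ∑ j, f i j := by
    intro f c
    rw [Finset.mul_sum]
    exact Finset.sum_congr rfl fun i _ => by rw [Finset.mul_sum]
  have hFsum : ∑ i, ∑ j, F i j ^ 2 ≤ CE ^ 2 := by
    have h1 : (∑ i, ∑ j, F i j ^ 2) = frobSq F := rfl
    rw [h1, hfrobF]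
    have h2 : frobSq E = (Real.sqrt (frobSq E)) ^ 2 :=
      (Real.sq_sqrt (frobSq_nonneg E)).symm
    rw [h2]
    exact pow_le_pow_left₀ (Real.sqrt_nonneg _) hCE 2
  have hχsum : ∑ i, χ i ≤ (k : ℝ) := by
    rw [hχ]
    rw [Finset.sum_boole]
    exact card_topIdx_le p k
  have hχsum0 : 0 ≤ ∑ i, χ i := Finset.sum_nonneg fun i _ => hχ0 i
  have hK10 : 0 ≤ K1 := by rw [hK1]; positivity
  have hK20 : 0 ≤ K2 := by rw [hK2]; positivity
  have hK30 : 0 ≤ K3 := by rw [hK3]; positivity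
  have hsum : ∑ i, ∑ j, ((d i - dt j) * A i j) ^ 2
      ≤ (K1 * CE ^ 2 + K2 * k ^ 2 + K3) / p := by
    calc ∑ i, ∑ j, ((d i - dt j) * A i j) ^ 2
        ≤ ∑ i, ∑ j, (K1 * (F i j ^ 2 / p) + (K2 / p) * (χ i * χ j)
            + (K3 / p ^ 2) * A i j ^ 2) := by
          exact Finset.sum_le_sum fun i _ => Finset.sum_le_sum fun j _ => hpoint i j
      _ = K1 * ((∑ i, ∑ j, F i j ^ 2) / p) + (K2 / p) * ((∑ i, χ i) * (∑ j, χ j))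
            + (K3 / p ^ 2) * (∑ i, ∑ j, A i j ^ 2) := by
          simp only [Finset.sum_add_distrib]
          congr 1
          · congr 1
            · rw [hmm (fun i j => F i j ^ 2 / p) K1]
              simp only [← Finset.sum_div]
            · rw [hmm (fun i j => χ i * χ j) (K2 / p)]
              congr 1
              simp only [← Finset.mul_sum]
              rw [← Finset.sum_mul]
          · rw [hmm (fun i j => A i j ^ 2) (K3 / p ^ 2)]
      _ ≤ K1 * (CE ^ 2 / p) + (K2 / p) * ((k : ℝ) * (k : ℝ))
            + (K3 / p ^ 2) * (p : ℝ) := by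
          apply add_le_add
          apply add_le_add
          · apply mul_le_mul_of_nonneg_left _ hK10
            exact (div_le_div_iff_of_pos_right hp').mpr hFsum
          · apply mul_le_mul_of_nonneg_left _ (by positivity)
            exact mul_le_mul hχsum hχsum hχsum0 (by exact_mod_cast Nat.zero_le k)
          · rw [hsumA]
      _ = (K1 * CE ^ 2 + K2 * k ^ 2 + K3) / p := by
          field_simp
  have hKceq : K1 * CE ^ 2 + K2 * k ^ 2 + K3 = Kc k βlo g CE := by
    rw [hK1, hK2, hK3, hD1]
    unfold Kc
    ring
  have hfs : frobSq (centerM p k l U β' - centerM p k lt Ut β')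
      ≤ Kc k βlo g CE / p := by
    rw [hfrobstep, ← hKceq]
    exact hsum
  calc frob (centerM p k l U β' - centerM p k lt Ut β')
      = Real.sqrt (frobSq (centerM p k l U β' - centerM p k lt Ut β')) := frob_eq _
    _ ≤ Real.sqrt (Kc k βlo g CE / p) := Real.sqrt_le_sqrt hfs
    _ = Real.sqrt (Kc k βlo g CE) / Real.sqrt p := Real.sqrt_div (Kc_nonneg k βlo g CE) _

end Helper14

end Helpers14

open Filter in
/-- Perturbation bound for the centering matrix: for
`Σ̃_p = Σ_p + E_p/√p` (any sorted orthogonal eigendecomposition `Σ̃_p = Ũ_p diag(l̃_p) Ũ_pᵀ`),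
eventually `λ_k(Σ̃_p) > λ_{k+1}(Σ̃_p)` and
`‖M_{β_p}(Σ_p) - M_{β_p}(Σ̃_p)‖_F ≤ C/√p`. -/
theorem statement14
    (k : ℕ) (γ : ℕ → ℝ) (μ : Measure ℝ)
    (S : ∀ p, Matrix (Fin p) (Fin p) ℝ) (l : ∀ p, Fin p → ℝ)
    (U : ∀ p, Matrix (Fin p) (Fin p) ℝ)
    (hMAT : AssumptionMAT k γ μ S l U)
    (hgap : ∀ p, ∀ h : k < p, l p ⟨k, h⟩ < l p ⟨k - 1, by omega⟩)
    (βs : ℕ → ℝ) (β : ℝ) (hβlim : Tendsto βs atTop (nhds β)) (hβ : 0 < β)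
    (E : ∀ p, Matrix (Fin p) (Fin p) ℝ) (hEsym : ∀ p, (E p)ᵀ = E p)
    (hEbound : ∃ C : ℝ, ∀ p, frob (E p) ≤ C)
    -- any orthogonal eigendecomposition of `Σ̃_p = Σ_p + E_p/√p` with decreasing eigenvalues
    (lt : ∀ p, Fin p → ℝ) (Ut : ∀ p, Matrix (Fin p) (Fin p) ℝ)
    (hUt : ∀ p, (Ut p)ᵀ * Ut p = 1)
    (hdect : ∀ p, S p + (Real.sqrt (p : ℝ))⁻¹ • E p =
      Ut p * Matrix.diagonal (lt p) * (Ut p)ᵀ)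
    (hmonot : ∀ p, Antitone (lt p)) :
    ∃ C : ℝ, 0 < C ∧ ∃ p₀ : ℕ, ∀ p ≥ p₀,
      k < p ∧ eigAt lt k p < eigAt lt (k - 1) p ∧
      frob (centerM p k (l p) (U p) (βs p) - centerM p k (lt p) (Ut p) (βs p)) ≤
        C / Real.sqrt (p : ℝ) := by
  obtain ⟨hk0, hUorth, hdec, hmono, hγmono, hγgap, hγpos, hμprob, hμsupp, hconv, hweak⟩ :=
    hMAT
  obtain ⟨CE0, hCE0⟩ := hEbound
  set CE := max CE0 0 with hCEdef
  have hCE : ∀ p, frob (E p) ≤ CE := fun p => (hCE0 p).trans (le_max_left _ _)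
  have hCEnn : 0 ≤ CE := le_max_right _ _
  set Δ := γ k - γ (k + 1) with hΔ
  have hΔpos : 0 < Δ := by rw [hΔ]; linarith [hγgap]
  set δ := Δ / 8 with hδ
  have hδpos : 0 < δ := by rw [hδ]; positivity
  set g := Δ / 2 with hg
  have hgpos : 0 < g := by rw [hg]; positivity
  have hδval : δ = (γ k - γ (k + 1)) / 8 := by rw [hδ, hΔ]
  have hgval : g = (γ k - γ (k + 1)) / 2 := by rw [hg, hΔ]
  have hconv1 : Tendsto (fun p : ℕ => eigAt l (k - 1) p) atTop (nhds (γ k)) :=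
    hconv k hk0 (Nat.le_succ k)
  have hconv2 : Tendsto (fun p : ℕ => eigAt l k p) atTop (nhds (γ (k + 1))) := by
    have h := hconv (k + 1) (by omega) (le_refl _)
    simpa using h
  have hev1 : ∀ᶠ p : ℕ in atTop, γ k - δ < eigAt l (k - 1) p :=
    hconv1.eventually (eventually_gt_nhds (by linarith))
  have hev2 : ∀ᶠ p : ℕ in atTop, eigAt l k p < γ (k + 1) + δ :=
    hconv2.eventually (eventually_lt_nhds (by linarith))
  have hev3 : ∀ᶠ p : ℕ in atTop, β / 2 < βs p :=
    hβlim.eventually (eventually_gt_nhds (by linarith))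
  have hev4 : ∀ᶠ p : ℕ in atTop, k < p := eventually_gt_atTop k
  have hev5 : ∀ᶠ p : ℕ in atTop, CE / Real.sqrt p < δ := by
    filter_upwards [eventually_gt_atTop (Nat.ceil ((CE / δ) ^ 2))] with p hp
    have hp0 : 0 < p := lt_of_le_of_lt (Nat.zero_le _) hp
    have hp' : (0 : ℝ) < p := by exact_mod_cast hp0
    have hsp : 0 < Real.sqrt p := Real.sqrt_pos.mpr hp'
    have h1 : (CE / δ) ^ 2 < (p : ℝ) :=
      lt_of_le_of_lt (Nat.le_ceil _) (by exact_mod_cast hp)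
    have hcd : 0 ≤ CE / δ := by positivity
    have h2 : CE / δ < Real.sqrt p := by
      rw [← Real.sqrt_sq hcd]
      exact Real.sqrt_lt_sqrt (by positivity) h1
    have h3 : CE < Real.sqrt p * δ := by
      calc CE = (CE / δ) * δ := by field_simp
        _ < Real.sqrt p * δ := mul_lt_mul_of_pos_right h2 hδpos
    rw [div_lt_iff₀ hsp]
    linarith
  obtain ⟨p₀, hp₀⟩ :=
    eventually_atTop.mp (hev1.and (hev2.and (hev3.and (hev4.and hev5))))
  refine ⟨max (Real.sqrt (Helper14.Kc k (β / 2) g CE)) 1,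
    lt_of_lt_of_le one_pos (le_max_right _ _), p₀, ?_⟩
  intro p hp
  obtain ⟨h1, h2, h3, h4, h5⟩ := hp₀ p hp
  have hkp : k < p := h4
  have hppos : 0 < p := lt_of_le_of_lt (Nat.zero_le k) hkp
  have hp' : (0 : ℝ) < p := by exact_mod_cast hppos
  have hsp : 0 < Real.sqrt p := Real.sqrt_pos.mpr hp'
  have hW : ∀ i : Fin p, |l p i - lt p i| ≤ CE / Real.sqrt p := by
    intro i
    have hwa := Helper14.weyl_abs ((Real.sqrt (p : ℝ))⁻¹) (S p) (E p) (l p) (lt p)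
      (U p) (Ut p) (hUorth p) (hUt p) (hdec p) (hdect p) (hmono p) (hmonot p) i
    rw [abs_sub_comm]
    refine hwa.trans ?_
    rw [abs_of_nonneg (inv_nonneg.mpr (Real.sqrt_nonneg _)), div_eq_mul_inv, mul_comm]
    exact mul_le_mul_of_nonneg_right (hCE p) (inv_nonneg.mpr (Real.sqrt_nonneg _))
  have hk1p : k - 1 < p := by omega
  have e1 : eigAt l (k - 1) p = l p ⟨k - 1, hk1p⟩ := by simp [eigAt, hk1p]
  have e2 : eigAt l k p = l p ⟨k, hkp⟩ := by simp [eigAt, hkp]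
  have htopl : ∀ i : Fin p, (i : ℕ) < k → γ k - δ < l p i := by
    intro i hi
    have hile : (i : ℕ) ≤ k - 1 := by omega
    have hle : l p ⟨k - 1, hk1p⟩ ≤ l p i := hmono p (by rw [Fin.le_def]; exact hile)
    rw [e1] at h1
    linarith
  have hbulkl : ∀ j : Fin p, k ≤ (j : ℕ) → l p j < γ (k + 1) + δ := by
    intro j hj
    have hle : l p j ≤ l p ⟨k, hkp⟩ := hmono p (by rw [Fin.le_def]; exact hj)
    rw [e2] at h2
    linarith
  have htoplt : ∀ i : Fin p, (i : ℕ) < k → γ k - 2 * δ < lt p i := by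
    intro i hi
    have habs := abs_le.mp (hW i)
    have h6 := htopl i hi
    linarith [habs.1, habs.2]
  have hbulklt : ∀ j : Fin p, k ≤ (j : ℕ) → lt p j < γ (k + 1) + 2 * δ := by
    intro j hj
    have habs := abs_le.mp (hW j)
    have h6 := hbulkl j hj
    linarith [habs.1, habs.2]
  refine ⟨hkp, ?_, ?_⟩
  · have ek : eigAt lt k p = lt p ⟨k, hkp⟩ := by simp [eigAt, hkp]
    have ek1 : eigAt lt (k - 1) p = lt p ⟨k - 1, hk1p⟩ := by simp [eigAt, hk1p]
    rw [ek, ek1]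
    have ha := hbulklt ⟨k, hkp⟩ (by simp)
    have hb := htoplt ⟨k - 1, hk1p⟩ (by simpa using by omega)
    linarith
  · have hβ2 : (0 : ℝ) < β / 2 := by linarith
    have hsep1 : ∀ i j : Fin p, (i : ℕ) < k → k ≤ (j : ℕ) → g ≤ l p i - l p j := by
      intro i j hi hj
      have hA := htopl i hi
      have hB := hbulkl j hj
      linarith
    have hsep2 : ∀ i j : Fin p, (i : ℕ) < k → k ≤ (j : ℕ) → g ≤ l p i - lt p j := by
      intro i j hi hj
      have hA := htopl i hi
      have hB := hbulklt j hj
      linarith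
    have hsep3 : ∀ i j : Fin p, (i : ℕ) < k → k ≤ (j : ℕ) → g ≤ lt p i - l p j := by
      intro i j hi hj
      have hA := htoplt i hi
      have hB := hbulkl j hj
      linarith
    have hsep4 : ∀ i j : Fin p, (i : ℕ) < k → k ≤ (j : ℕ) → g ≤ lt p i - lt p j := by
      intro i j hi hj
      have hA := htoplt i hi
      have hB := hbulklt j hj
      linarith
    have hmain := Helper14.main_est p k hkp (l p) (lt p) (U p) (Ut p) (E p)
      (hUorth p) (hUt p) (by rw [← hdec p]; exact hdect p) (βs p) (β / 2) g CE
      hβ2 (le_of_lt h3) hgpos (hCE p) hW hsep1 hsep2 hsep3 hsep4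
    refine hmain.trans ?_
    exact (div_le_div_iff_of_pos_right hsp).mpr (le_max_left _ _)
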